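/- arXiv:1706.04893 — 4 statements merged into one kernel-verified Lean document; each statement's English description precedes it below -/
import Mathlib

section
/- Lagrange inversion formula: if f is a formal power series over a field of characteristic zero with f(0) = 0 and nonzero coefficient of t, then for every k ≥ 1, the coefficient of t^k in f^{⟨-1⟩} equals (1/k) times the coefficient of u^{k-1} in (u/f(u))^k. -/
open PowerSeries Finset

/-- Composition `f ∘ g` of formal power series (meaningful when `g` has zero
constant term). -/
noncomputable def PowerSeries.comp {R : Type*} [CommRing R] (f g : R⟦X⟧) : R⟦X⟧ :=
  PowerSeries.mk fun k => ∑ n ∈ Finset.range (k + 1), coeff n f * coeff k (g ^ n)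

namespace LagrangeAux

variable {K : Type*} [Field K]

lemma coeff_comp (f g : K⟦X⟧) (k : ℕ) :
    coeff k (f.comp g) = ∑ n ∈ range (k + 1), coeff n f * coeff k (g ^ n) := by
  simp [PowerSeries.comp]

lemma coeff_pow_eq_zero {g : K⟦X⟧} (hg : constantCoeff g = 0) {k n : ℕ} (h : k < n) :
    coeff k (g ^ n) = 0 := by
  have : (X : K⟦X⟧) ^ n ∣ g ^ n := pow_dvd_pow_of_dvd (X_dvd_iff.mpr hg) n
  exact (X_pow_dvd_iff.mp this) k h

lemma coeff_mul_congr {F F' G G' : K⟦X⟧} {k : ℕ}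
    (hF : ∀ j ≤ k, coeff j F = coeff j F')
    (hG : ∀ j ≤ k, coeff j G = coeff j G') :
    coeff k (F * G) = coeff k (F' * G') := by
  rw [coeff_mul, coeff_mul]
  refine Finset.sum_congr rfl fun p hp => ?_
  have hpk := Finset.HasAntidiagonal.mem_antidiagonal.mp hp
  rw [hF p.1 (by omega), hG p.2 (by omega)]

lemma coeff_comp_congr {F F' g : K⟦X⟧} {k : ℕ}
    (hF : ∀ j ≤ k, coeff j F = coeff j F') :
    coeff k (F.comp g) = coeff k (F'.comp g) := by
  rw [coeff_comp, coeff_comp]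
  refine Finset.sum_congr rfl fun n hn => ?_
  rw [hF n (by simpa [Nat.lt_succ_iff] using hn)]

lemma coe_comp (P : Polynomial K) {g : K⟦X⟧} (hg : constantCoeff g = 0) :
    ((P : K⟦X⟧)).comp g = Polynomial.aeval g P := by
  ext k
  rw [coeff_comp, Polynomial.aeval_eq_sum_range, map_sum]
  set M := max (k + 1) (P.natDegree + 1) with hM
  have h1 : ∑ n ∈ range (k + 1), coeff n (P : K⟦X⟧) * coeff k (g ^ n)
      = ∑ n ∈ range M, P.coeff n * coeff k (g ^ n) := by
    rw [Finset.sum_subset (Finset.range_subset_range.mpr (le_max_left _ _))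
      (fun n _ hn => by rw [coeff_pow_eq_zero hg (by simpa [Nat.lt_succ_iff] using hn), mul_zero])]
    exact Finset.sum_congr rfl fun n _ => by rw [Polynomial.coeff_coe]
  have h2 : ∑ i ∈ range (P.natDegree + 1), coeff k (P.coeff i • g ^ i)
      = ∑ n ∈ range M, P.coeff n * coeff k (g ^ n) := by
    rw [Finset.sum_subset (Finset.range_subset_range.mpr (le_max_right _ _))
      (fun n _ hn => by
        rw [Polynomial.coeff_eq_zero_of_natDegree_lt (by simpa [Nat.lt_succ_iff] using hn)]
        simp)]
    exact Finset.sum_congr rfl fun n _ => by rw [map_smul, smul_eq_mul]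
  rw [h1, ← h2]

lemma comp_mul (F G : K⟦X⟧) {g : K⟦X⟧} (hg : constantCoeff g = 0) :
    (F * G).comp g = F.comp g * G.comp g := by
  ext k
  set P := trunc (k + 1) F with hP
  set Q := trunc (k + 1) G with hQ
  have hFP : ∀ j ≤ k, coeff j F = coeff j (P : K⟦X⟧) := fun j hj => by
    rw [hP, Polynomial.coeff_coe, coeff_trunc, if_pos (Nat.lt_succ_iff.mpr hj)]
  have hGQ : ∀ j ≤ k, coeff j G = coeff j (Q : K⟦X⟧) := fun j hj => by
    rw [hQ, Polynomial.coeff_coe, coeff_trunc, if_pos (Nat.lt_succ_iff.mpr hj)]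
  calc coeff k ((F * G).comp g)
      = coeff k (((P * Q : Polynomial K) : K⟦X⟧).comp g) := by
        refine coeff_comp_congr fun j hj => ?_
        rw [Polynomial.coe_mul]
        exact coeff_mul_congr (fun i hi => hFP i (hi.trans hj)) (fun i hi => hGQ i (hi.trans hj))
    _ = coeff k (Polynomial.aeval g P * Polynomial.aeval g Q) := by
        rw [coe_comp _ hg, map_mul]
    _ = coeff k (F.comp g * G.comp g) := by
        refine coeff_mul_congr (fun j hj => ?_) (fun j hj => ?_)
        · rw [← coe_comp P hg]
          exact coeff_comp_congr fun i hi => (hFP i (hi.trans hj)).symm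
        · rw [← coe_comp Q hg]
          exact coeff_comp_congr fun i hi => (hGQ i (hi.trans hj)).symm

end LagrangeAux

namespace LagrangeAux

variable {K : Type*} [Field K]

lemma comp_one {g : K⟦X⟧} : (1 : K⟦X⟧).comp g = 1 := by
  ext k
  rw [coeff_comp]
  rw [Finset.sum_eq_single 0 (fun n _ hn => by rw [coeff_one, if_neg hn, zero_mul])
    (fun h => absurd (Finset.mem_range.mpr (Nat.succ_pos k)) h)]
  simp

lemma comp_pow (F : K⟦X⟧) (n : ℕ) {g : K⟦X⟧} (hg : constantCoeff g = 0) :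
    (F ^ n).comp g = (F.comp g) ^ n := by
  induction n with
  | zero => simpa using comp_one
  | succ n ih => rw [pow_succ, pow_succ, comp_mul _ _ hg, ih]

lemma comp_X_left {f : K⟦X⟧} (hf : constantCoeff f = 0) : (X : K⟦X⟧).comp f = f := by
  ext k
  rw [coeff_comp]
  cases k with
  | zero => simpa using hf.symm
  | succ m =>
    rw [Finset.sum_eq_single 1 (fun n _ hn => by rw [coeff_X, if_neg hn, zero_mul])
      (fun h => absurd (Finset.mem_range.mpr (by omega)) h)]
    simp

lemma comp_X_right (f : K⟦X⟧) : f.comp X = f := by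
  ext k
  rw [coeff_comp]
  rw [Finset.sum_eq_single k (fun n _ hn => by
      rw [coeff_X_pow, if_neg (fun h => hn h.symm), mul_zero])
    (fun h => absurd (Finset.mem_range.mpr (Nat.lt_succ_self k)) h)]
  simp

lemma comp_assoc (f g h : K⟦X⟧) (hg : constantCoeff g = 0)
    (hh : constantCoeff h = 0) :
    (f.comp g).comp h = f.comp (g.comp h) := by
  ext k
  rw [coeff_comp, coeff_comp]
  have LHS : ∑ m ∈ range (k + 1), coeff m (f.comp g) * coeff k (h ^ m)
      = ∑ m ∈ range (k + 1), ∑ n ∈ range (k + 1),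
          coeff n f * coeff m (g ^ n) * coeff k (h ^ m) := by
    refine Finset.sum_congr rfl fun m hm => ?_
    rw [coeff_comp, Finset.sum_mul]
    refine Finset.sum_subset (Finset.range_subset_range.mpr (by
      simpa [Nat.succ_le_succ_iff, Nat.lt_succ_iff] using hm)) fun n _ hn => ?_
    rw [coeff_pow_eq_zero hg (by simpa [Nat.lt_succ_iff] using hn), mul_zero, zero_mul]
  rw [LHS, Finset.sum_comm]
  refine Finset.sum_congr rfl fun n _ => ?_
  rw [← comp_pow _ _ hh, coeff_comp, Finset.mul_sum]
  refine Finset.sum_congr rfl fun m _ => by ring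

lemma comp_injective {f u v : K⟦X⟧} (hf0 : constantCoeff f = 0) (hf1 : coeff 1 f ≠ 0)
    (hu : constantCoeff u = 0) (hv : constantCoeff v = 0)
    (h : f.comp u = f.comp v) : u = v := by
  ext d
  induction d using Nat.strong_induction_on with
  | _ d ih =>
  rcases Nat.eq_zero_or_pos d with hd | hd
  · subst hd; rw [coeff_zero_eq_constantCoeff, hu, hv]
  have hsum : ∑ n ∈ range (d + 1), coeff n f * coeff d (u ^ n)
      = ∑ n ∈ range (d + 1), coeff n f * coeff d (v ^ n) := by
    rw [← coeff_comp, ← coeff_comp, h]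
  have hpow : ∀ n ∈ range (d + 1), n ≠ 1 → coeff d (u ^ n) = coeff d (v ^ n) := by
    intro n _ hn1
    rcases Nat.eq_zero_or_pos n with h0 | h0
    · subst h0; rfl
    have h2 : 2 ≤ n := by omega
    have key : coeff d (u ^ n - v ^ n) = 0 := by
      rw [← geom_sum₂_mul u v n, coeff_mul]
      refine Finset.sum_eq_zero fun p hp => ?_
      have hpd := Finset.HasAntidiagonal.mem_antidiagonal.mp hp
      rcases Nat.lt_or_ge p.2 d with h2' | h2'
      · rw [show coeff p.2 (u - v) = 0 from by rw [map_sub, ih p.2 h2', sub_self], mul_zero]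
      · have hp2 : p.2 = d := by omega
        have hp1 : p.1 = 0 := by omega
        rw [hp1, coeff_zero_eq_constantCoeff, map_sum]
        rw [Finset.sum_eq_zero fun i hi => ?_, zero_mul]
        rw [map_mul, map_pow, map_pow, hu, hv]
        rcases Nat.eq_zero_or_pos i with h0' | h0'
        · rw [h0', pow_zero, one_mul]; exact zero_pow (by omega)
        · rw [zero_pow (by omega : i ≠ 0), zero_mul]
    have key' : coeff d (u ^ n) - coeff d (v ^ n) = 0 := by rw [← map_sub]; exact key
    exact sub_eq_zero.mp key'
  have hfin : coeff 1 f * coeff d u = coeff 1 f * coeff d v := by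
    have h0 : ∑ n ∈ range (d + 1),
        (coeff n f * coeff d (u ^ n) - coeff n f * coeff d (v ^ n)) = 0 := by
      rw [Finset.sum_sub_distrib, hsum, sub_self]
    rw [Finset.sum_eq_single_of_mem 1 (Finset.mem_range.mpr (by omega))
      (fun n hn hn1 => by rw [hpow n hn hn1, sub_self])] at h0
    simpa [pow_one, sub_eq_zero] using h0
  exact mul_left_cancel₀ hf1 hfin

end LagrangeAux

namespace LagrangeAux

variable {K : Type*} [Field K]

lemma derivative_C_mul (r : K) (x : K⟦X⟧) :
    d⁄dX K (C r * x) = C r * d⁄dX K x := by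
  rw [Derivation.leibniz, derivative_C, smul_eq_mul, smul_eq_mul, mul_zero, add_zero]

lemma key_vanish [CharZero K] {q : K⟦X⟧} (hq0 : constantCoeff q ≠ 0) {j : ℕ} (hj : 1 ≤ j) :
    coeff j (d⁄dX K (X * q) * q⁻¹ ^ (j + 1)) = 0 := by
  obtain ⟨i, rfl⟩ : ∃ i, j = i + 1 := ⟨j - 1, by omega⟩
  have hqq : q * q⁻¹ = 1 := PowerSeries.mul_inv_cancel q hq0
  set w : K⟦X⟧ := q⁻¹ ^ (i + 1) with hw
  have hdf : d⁄dX K (X * q) = q + X * d⁄dX K q := by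
    rw [Derivation.leibniz, smul_eq_mul, smul_eq_mul, derivative_X, mul_one, add_comm]
  have hwd : d⁄dX K w = -((i + 1 : ℕ) : K⟦X⟧) * (q⁻¹ ^ (i + 2) * d⁄dX K q) := by
    rw [hw, Derivation.leibniz_pow, derivative_inv', smul_eq_mul, nsmul_eq_mul]
    have : (i + 1) - 1 = i := rfl
    rw [this]
    ring_nf
  have main : ((i + 1 : ℕ) : K⟦X⟧) * (d⁄dX K (X * q) * q⁻¹ ^ (i + 1 + 1))
      = ((i + 1 : ℕ) : K⟦X⟧) * w - X * d⁄dX K w := by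
    rw [hdf, hwd, hw]
    have h1 : i + 1 + 1 = i + 2 := rfl
    rw [h1]
    linear_combination (((i + 1 : ℕ) : K⟦X⟧) * q⁻¹ ^ (i + 1)) * hqq
  have hcast : ((i + 1 : ℕ) : K⟦X⟧) = C ((i + 1 : ℕ) : K) := by
    simp [map_natCast]
  have := congrArg (coeff (i + 1)) main
  rw [hcast, coeff_C_mul, map_sub, coeff_C_mul, coeff_succ_X_mul, coeff_derivative,
    hw] at this
  have hz : ((i + 1 : ℕ) : K) * coeff (i + 1) (d⁄dX K (X * q) * q⁻¹ ^ (i + 1 + 1)) = 0 := by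
    rw [this]
    push_cast
    ring
  have hne : ((i + 1 : ℕ) : K) ≠ 0 := Nat.cast_ne_zero.mpr (by omega)
  exact (mul_eq_zero.mp hz).resolve_left hne

end LagrangeAux


open LagrangeAux in
/-- Lagrange's inversion formula: if `f` is a power series over a field of
characteristic zero with `f(0) = 0` and nonzero linear coefficient, writing
`f = X·q` (so that `u/f(u) = q⁻¹`), the coefficient of `t^k` in the
compositional inverse `g` of `f` equals `(1/k) · [u^{k-1}] (u/f(u))^k`. -/
theorem lagrange_inversion {K : Type*} [Field K] [CharZero K]
    (f g q : K⟦X⟧) (hf0 : constantCoeff f = 0) (hf1 : coeff 1 f ≠ 0)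
    (hq : f = X * q)
    (hg0 : constantCoeff g = 0) (hinv : f.comp g = X) :
    ∀ k : ℕ, 1 ≤ k →
      coeff k g = (1 / (k : K)) * coeff (k - 1) (q⁻¹ ^ k) := by
  intro k hk
  obtain ⟨m, rfl⟩ : ∃ m, k = m + 1 := ⟨k - 1, by omega⟩
  -- constant coefficient of q
  have hc1 : coeff 1 f = constantCoeff q := by
    rw [hq, coeff_succ_X_mul, coeff_zero_eq_constantCoeff]
  have hq0 : constantCoeff q ≠ 0 := hc1 ▸ hf1
  have hqq : q * q⁻¹ = 1 := PowerSeries.mul_inv_cancel q hq0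
  -- g is a two-sided compositional inverse
  have hgf : g.comp f = X := by
    have h0 : constantCoeff (g.comp f) = 0 := by
      rw [← coeff_zero_eq_constantCoeff, coeff_comp]
      simp [coeff_zero_eq_constantCoeff, hg0]
    apply comp_injective hf0 hf1 h0 (by simp)
    rw [comp_X_right, ← comp_assoc f g f hg0 hf0, hinv, comp_X_left hf0]
  set Q : K⟦X⟧ := q⁻¹ ^ (m + 1) with hQ
  set S : K⟦X⟧ := ∑ n ∈ range (m + 2), C (coeff n g) * f ^ n with hSdef
  have hS : ∀ j ≤ m + 1, coeff j S = coeff j (X : K⟦X⟧) := by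
    intro j hj
    calc coeff j S = ∑ n ∈ range (m + 2), coeff n g * coeff j (f ^ n) := by
          rw [hSdef, map_sum]
          exact Finset.sum_congr rfl fun n _ => coeff_C_mul _ _ _
      _ = ∑ n ∈ range (j + 1), coeff n g * coeff j (f ^ n) := by
          refine (Finset.sum_subset (Finset.range_subset_range.mpr (by omega)) fun n _ hn => ?_).symm
          rw [coeff_pow_eq_zero hf0 (by simpa [Nat.lt_succ_iff] using hn), mul_zero]
      _ = coeff j (g.comp f) := (coeff_comp _ _ _).symm
      _ = coeff j X := by rw [hgf]
  have hS' : ∀ j ≤ m, coeff j (d⁄dX K S) = coeff j (1 : K⟦X⟧) := by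
    intro j hj
    rw [coeff_derivative, hS (j + 1) (by omega)]
    rcases j with _ | i <;> simp [coeff_X, coeff_one]
  have h1 : coeff m (d⁄dX K S * Q) = coeff m Q := by
    rw [coeff_mul_congr hS' (fun j _ => rfl), one_mul]
  -- expand the left-hand side
  have hterm : ∀ n, coeff m ((C (coeff n g) * d⁄dX K (f ^ n)) * Q)
      = coeff n g * (((n : ℕ) : K) * coeff m (f ^ (n - 1) * (d⁄dX K f * Q))) := by
    intro n
    have hser : (C (coeff n g) * d⁄dX K (f ^ n)) * Q
        = C (coeff n g) * (C ((n : ℕ) : K) * (f ^ (n - 1) * (d⁄dX K f * Q))) := by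
      rw [Derivation.leibniz_pow, smul_eq_mul, nsmul_eq_mul,
        show ((n : ℕ) : K⟦X⟧) = C ((n : ℕ) : K) by simp [map_natCast]]
      ring
    rw [hser, coeff_C_mul, coeff_C_mul]
  have h2 : coeff m (d⁄dX K S * Q)
      = ∑ n ∈ range (m + 2), coeff n g * (((n : ℕ) : K)
          * coeff m (f ^ (n - 1) * (d⁄dX K f * Q))) := by
    rw [hSdef, map_sum, Finset.sum_mul, map_sum]
    refine Finset.sum_congr rfl fun n _ => ?_
    rw [derivative_C_mul, hterm]
  -- evaluate the individual terms
  have hT : ∀ n ∈ range (m + 2), n ≠ m + 1 →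
      coeff n g * (((n : ℕ) : K) * coeff m (f ^ (n - 1) * (d⁄dX K f * Q))) = 0 := by
    intro n hn hne
    rcases Nat.eq_zero_or_pos n with h0 | h0
    · subst h0; simp
    obtain ⟨p, rfl⟩ : ∃ p, n = p + 1 := ⟨n - 1, by omega⟩
    have hpm : p < m := by
      have := Finset.mem_range.mp hn; omega
    set j := m - p with hjdef
    have hj1 : 1 ≤ j := by omega
    have hjp : j + p = m := by omega
    have hfp : f ^ (p + 1 - 1) * (d⁄dX K f * Q) = X ^ p * (q ^ p * (d⁄dX K f * Q)) := by
      rw [show p + 1 - 1 = p from rfl, hq, mul_pow]; ring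
    have hqQ : q ^ p * Q = q⁻¹ ^ (j + 1) := by
      rw [hQ, show m + 1 = p + (j + 1) by omega, pow_add, ← mul_assoc, ← mul_pow, hqq,
        one_pow, one_mul]
    have : coeff m (f ^ (p + 1 - 1) * (d⁄dX K f * Q)) = 0 := by
      rw [hfp, show m = j + p by omega, coeff_X_pow_mul,
        show q ^ p * (d⁄dX K f * Q) = d⁄dX K f * (q ^ p * Q) by ring, hqQ, hq]
      exact key_vanish hq0 hj1
    rw [this, mul_zero, mul_zero]
  have hTk : coeff m (f ^ (m + 1 - 1) * (d⁄dX K f * Q)) = 1 := by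
    have hfp : f ^ (m + 1 - 1) * (d⁄dX K f * Q) = X ^ m * (q ^ m * (d⁄dX K f * Q)) := by
      rw [show m + 1 - 1 = m from rfl, hq, mul_pow]; ring
    rw [hfp]
    have hcoe := coeff_X_pow_mul (q ^ m * (d⁄dX K f * Q)) m 0
    rw [zero_add] at hcoe
    rw [hcoe, coeff_zero_eq_constantCoeff,
      map_mul, map_mul, map_pow, hQ, map_pow, PowerSeries.constantCoeff_inv]
    have hdf0 : constantCoeff (d⁄dX K f) = constantCoeff q := by
      rw [← hc1, ← coeff_zero_eq_constantCoeff, coeff_derivative]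
      norm_num
    rw [hdf0]
    set c := constantCoeff q
    field_simp
    rw [one_div, ← pow_succ, ← mul_pow, mul_inv_cancel₀ hq0, one_pow]
  have h3 : coeff m Q = ((m + 1 : ℕ) : K) * coeff (m + 1) g := by
    rw [← h1, h2, Finset.sum_eq_single_of_mem (m + 1) (Finset.mem_range.mpr (by omega)) hT,
      hTk, mul_one]
    ring
  have hne : ((m + 1 : ℕ) : K) ≠ 0 := Nat.cast_ne_zero.mpr (by omega)
  rw [show m + 1 - 1 = m from rfl, h3, one_div, inv_mul_cancel_left₀ hne]
end

section
/- Define a_n = (1/(2n+1)) · Σ_{k=⌊n/2⌋}^{n} (-1)^{n-k} · C(2n+k,k) · C(k,n-k) · (1/6)^{2k-n} · (1/120)^{n-k}. Then for all n ≥ 2, the sequence satisfies the recurrence s_0(n)·a_n - s_1(n)·a_{n-1} + s_2(n)·a_{n-2} = 0, where s_0(n) = 128n(n-1)(2n+1)(2n-1)(5n-6), s_1(n) = 80(n-1)(2n-1)(5n-1)(15n^2-30n+14), and s_2(n) = 3(5n-1)(5n-4)(5n-6)(5n-7)(5n-8). -/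
open Finset
open Nat


def Hq (M k : ℕ) : ℚ :=
  if k ≤ M then
    (-1 : ℚ) ^ (M - k) * (Nat.choose (2 * M + k) k : ℚ) *
      (Nat.choose k (M - k) : ℚ) * (1/6 : ℚ) ^ (2 * (k : ℤ) - (M : ℤ)) *
      (1/120 : ℚ) ^ ((M : ℤ) - (k : ℤ))
  else 0

def Rp (n k : ℕ) : ℚ :=
  ((-2448)*(n:ℚ) + 19396*(n:ℚ)^2 - 41577*(n:ℚ)^3 + 34014*(n:ℚ)^4 - 9545*(n:ℚ)^5)
  + (k:ℚ)*(2376 - 19344*(n:ℚ) + 42357*(n:ℚ)^2 - 35087*(n:ℚ)^3 + 9960*(n:ℚ)^4)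
  + (k:ℚ)^2*(404 - 1554*(n:ℚ) + 1311*(n:ℚ)^2 - 305*(n:ℚ)^3)
  + (k:ℚ)^3*((-204) + 602*(n:ℚ) - 360*(n:ℚ)^2)
  + (k:ℚ)^4*(24 - 20*(n:ℚ))

/-- The Zeilberger certificate `G(m+2, k)` (division-free form). -/
def Gq (m k : ℕ) : ℚ :=
  if k ≤ m + 2 then
    48 * Rp (m+2) k * (-1 : ℚ) ^ (m + 2 - k) * (Nat.choose (2 * m + k) k : ℚ) *
      (Nat.choose k (m + 2 - k) : ℚ) * (1/6 : ℚ) ^ (2 * (k : ℤ) - ((m : ℤ) + 2)) *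
      (1/120 : ℚ) ^ (((m : ℤ) + 2) - (k : ℤ))
  else 0

def Pm0 (m : ℕ) : ℚ := 128*((m:ℚ)+2)*((m:ℚ)+1)*(2*(m:ℚ)+3)*(5*(m:ℚ)+4)*(2*(m:ℚ)+1)
def Pm1 (m : ℕ) : ℚ := 80*((m:ℚ)+1)*(5*(m:ℚ)+9)*(15*(m:ℚ)^2+30*(m:ℚ)+14)*(2*(m:ℚ)+1)
def Pm2 (m : ℕ) : ℚ := 3*(5*(m:ℚ)+9)*(5*(m:ℚ)+6)*(5*(m:ℚ)+4)*(5*(m:ℚ)+3)*(5*(m:ℚ)+2)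

lemma Hq_zero_of_lt {M k : ℕ} (h : M < k) : Hq M k = 0 := by
  simp [Hq, Nat.not_le.mpr h]

lemma Hq_zero_of_two_mul_lt {M k : ℕ} (h : 2 * k < M) : Hq M k = 0 := by
  unfold Hq
  split
  · have : Nat.choose k (M - k) = 0 := Nat.choose_eq_zero_of_lt (by omega)
    simp [this]
  · rfl

lemma Gq_zero_of_lt {m k : ℕ} (h : m + 2 < k) : Gq m k = 0 := by
  simp [Gq, Nat.not_le.mpr h]

lemma Gq_zero_of_two_mul_lt {m k : ℕ} (h : 2 * k < m + 2) : Gq m k = 0 := by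
  unfold Gq
  split
  · have : Nat.choose k (m + 2 - k) = 0 := Nat.choose_eq_zero_of_lt (by omega)
    simp [this]
  · rfl

lemma Hq_eq (M k b c : ℕ) (hb : M = k + b) (hc : 2 * k = M + c) :
    Hq M k = (-1 : ℚ) ^ b * (Nat.choose (2 * M + k) k : ℚ) *
      (Nat.choose k b : ℚ) * (1/6 : ℚ) ^ c * (1/120 : ℚ) ^ b := by
  unfold Hq
  rw [if_pos (by omega)]
  have h1 : M - k = b := by omega
  have h2 : 2 * (k : ℤ) - (M : ℤ) = (c : ℤ) := by push_cast; omega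
  have h3 : (M : ℤ) - (k : ℤ) = (b : ℤ) := by push_cast; omega
  rw [h1, h2, h3, zpow_natCast, zpow_natCast]

lemma Gq_eq (m k b c : ℕ) (hb : m + 2 = k + b) (hc : 2 * k = m + 2 + c) :
    Gq m k = 48 * Rp (m+2) k * (-1 : ℚ) ^ b * (Nat.choose (2 * m + k) k : ℚ) *
      (Nat.choose k b : ℚ) * (1/6 : ℚ) ^ c * (1/120 : ℚ) ^ b := by
  unfold Gq
  rw [if_pos (by omega)]
  have h1 : m + 2 - k = b := by omega
  have h2 : 2 * (k : ℤ) - ((m : ℤ) + 2) = (c : ℤ) := by push_cast; omega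
  have h3 : ((m : ℤ) + 2) - (k : ℤ) = (b : ℤ) := by push_cast; omega
  rw [h1, h2, h3, zpow_natCast, zpow_natCast]

lemma fc1 (x : ℕ) : ((x+1)! : ℚ) = ((x:ℚ)+1) * (x)! := by
  rw [Nat.factorial_succ]; push_cast; ring
lemma fc2 (x : ℕ) : ((x+2)! : ℚ) = ((x:ℚ)+2)*((x:ℚ)+1) * (x)! := by
  rw [show x+2 = (x+1)+1 from rfl, fc1, fc1]; push_cast; ring
lemma fc3 (x : ℕ) : ((x+3)! : ℚ) = ((x:ℚ)+3)*((x:ℚ)+2)*((x:ℚ)+1) * (x)! := by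
  rw [show x+3 = (x+2)+1 from rfl, fc1, fc2]; push_cast; ring
lemma fc4 (x : ℕ) : ((x+4)! : ℚ) = ((x:ℚ)+4)*((x:ℚ)+3)*((x:ℚ)+2)*((x:ℚ)+1) * (x)! := by
  rw [show x+4 = (x+3)+1 from rfl, fc1, fc3]; push_cast; ring
lemma fc5 (x : ℕ) : ((x+5)! : ℚ) = ((x:ℚ)+5)*((x:ℚ)+4)*((x:ℚ)+3)*((x:ℚ)+2)*((x:ℚ)+1) * (x)! := by
  rw [show x+5 = (x+4)+1 from rfl, fc1, fc4]; push_cast; ring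

lemma fne (x : ℕ) : ((x)! : ℚ) ≠ 0 := by
  exact_mod_cast Nat.factorial_ne_zero x

-- Case 6 : k = m + 2
lemma case6 (m : ℕ) : Pm0 m * Hq (m+2) (m+2) = - Gq m (m+2) := by
  rw [Hq_eq (m+2) (m+2) 0 (m+2) (by omega) (by omega),
      Gq_eq m (m+2) 0 (m+2) (by omega) (by omega)]
  rw [show 2*(m+2)+(m+2) = 3*m+2+4 by ring, show 2*m+(m+2) = 3*m+2 by ring]
  rw [Nat.cast_choose ℚ (show m+2 ≤ 3*m+2+4 by omega),
      Nat.cast_choose ℚ (show m+2 ≤ 3*m+2 by omega)]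
  rw [show 3*m+2+4 - (m+2) = 2*m+4 by omega, show 3*m+2 - (m+2) = 2*m by omega,
      show (2*m+4) = 2*m+4 by rfl]
  rw [show ((2*m+4)) = (2*m)+4 by omega, fc4 (3*m+2), fc4 (2*m)]
  simp only [Nat.choose_self, Nat.choose_zero_right, Nat.cast_one, pow_zero, pow_succ]
  unfold Pm0 Rp
  have F1 := fne (3*m+2); have F2 := fne (2*m); have F3 := fne (m+2)
  push_cast
  field_simp
  ring

-- Case 5 : k = m + 1
lemma case5 (m : ℕ) : Pm0 m * Hq (m+2) (m+1) - Pm1 m * Hq (m+1) (m+1)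
    = Gq m (m+2) - Gq m (m+1) := by
  rw [Hq_eq (m+2) (m+1) 1 m (by omega) (by omega),
      Hq_eq (m+1) (m+1) 0 (m+1) (by omega) (by omega),
      Gq_eq m (m+2) 0 (m+2) (by omega) (by omega),
      Gq_eq m (m+1) 1 m (by omega) (by omega)]
  rw [show 2*(m+2)+(m+1) = 3*m+1+4 by ring, show 2*(m+1)+(m+1) = 3*m+1+2 by ring,
      show 2*m+(m+2) = 3*m+1+1 by ring, show 2*m+(m+1) = 3*m+1 by ring]
  rw [Nat.cast_choose ℚ (show m+1 ≤ 3*m+1+4 by omega),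
      Nat.cast_choose ℚ (show m+1 ≤ 3*m+1+2 by omega),
      Nat.cast_choose ℚ (show m+2 ≤ 3*m+1+1 by omega),
      Nat.cast_choose ℚ (show m+1 ≤ 3*m+1 by omega)]
  rw [show 3*m+1+4 - (m+1) = 2*m+4 by omega, show 3*m+1+2 - (m+1) = 2*m+2 by omega,
      show 3*m+1+1 - (m+2) = 2*m by omega, show 3*m+1 - (m+1) = 2*m by omega]
  rw [fc4 (3*m+1), fc2 (3*m+1), fc1 (3*m+1), fc4 (2*m), fc2 (2*m), fc1 m, fc2 m]
  simp only [Nat.choose_one_right, Nat.choose_zero_right, Nat.cast_one, pow_zero,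
    pow_succ, pow_one]
  unfold Pm0 Pm1 Rp
  have F1 := fne (3*m+1); have F2 := fne (2*m); have F3 := fne m
  push_cast
  field_simp
  ring

-- Case 2 : m = 2k
lemma case2 (k : ℕ) : Pm2 (2*k) * Hq (2*k) k = Gq (2*k) (k+1) := by
  rw [Hq_eq (2*k) k k 0 (by omega) (by omega),
      Gq_eq (2*k) (k+1) (k+1) 0 (by omega) (by omega)]
  rw [show 2*(2*k)+k = 5*k by ring, show 2*(2*k)+(k+1) = 5*k+1 by ring]
  rw [Nat.cast_choose ℚ (show k ≤ 5*k by omega),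
      Nat.cast_choose ℚ (show k+1 ≤ 5*k+1 by omega)]
  rw [show 5*k - k = 4*k by omega, show 5*k+1 - (k+1) = 4*k by omega]
  rw [fc1 (5*k), fc1 k]
  simp only [Nat.choose_self, Nat.cast_one, pow_zero, pow_succ]
  unfold Pm2 Rp
  have F1 := fne (5*k); have F2 := fne (4*k); have F3 := fne k
  push_cast
  field_simp
  ring

-- Case 3 : m = 2j+1, k = j+1
lemma case3 (j : ℕ) : - Pm1 (2*j+1) * Hq (2*j+2) (j+1) + Pm2 (2*j+1) * Hq (2*j+1) (j+1)
    = Gq (2*j+1) (j+2) := by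
  rw [Hq_eq (2*j+2) (j+1) (j+1) 0 (by omega) (by omega),
      Hq_eq (2*j+1) (j+1) j 1 (by omega) (by omega),
      Gq_eq (2*j+1) (j+2) (j+1) 1 (by omega) (by omega)]
  rw [show 2*(2*j+2)+(j+1) = 5*j+3+2 by ring, show 2*(2*j+1)+(j+1) = 5*j+3 by ring,
      show 2*(2*j+1)+(j+2) = 5*j+3+1 by ring]
  rw [Nat.cast_choose ℚ (show j+1 ≤ 5*j+3+2 by omega),
      Nat.cast_choose ℚ (show j+1 ≤ 5*j+3 by omega),
      Nat.cast_choose ℚ (show j+2 ≤ 5*j+3+1 by omega)]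
  rw [show 5*j+3+2 - (j+1) = 4*j+2+2 by omega, show 5*j+3 - (j+1) = 4*j+2 by omega,
      show 5*j+3+1 - (j+2) = 4*j+2 by omega]
  rw [fc2 (5*j+3), fc1 (5*j+3), fc2 (4*j+2), fc1 j, fc2 j]
  rw [Nat.choose_succ_self_right]
  rw [show (j+1).choose (j+1) = 1 from Nat.choose_self _,
      show (j+2).choose (j+1) = j+2 from by
        rw [show j+2 = (j+1)+1 from rfl, Nat.choose_succ_self_right]]
  simp only [Nat.cast_one, pow_zero, pow_succ, pow_one]
  unfold Pm1 Pm2 Rp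
  have F1 := fne (5*j+3); have F2 := fne (4*j+2); have F3 := fne j
  push_cast
  field_simp
  ring

-- Case 4 (interior) : m = 2d+e+2, k = d+e+2
lemma case4 (d e : ℕ) :
    Pm0 (2*d+e+2) * Hq (2*d+e+2+2) (d+e+2) - Pm1 (2*d+e+2) * Hq (2*d+e+2+1) (d+e+2)
      + Pm2 (2*d+e+2) * Hq (2*d+e+2) (d+e+2)
    = Gq (2*d+e+2) (d+e+2+1) - Gq (2*d+e+2) (d+e+2) := by
  rw [Hq_eq (2*d+e+2+2) (d+e+2) (d+2) e (by omega) (by omega),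
      Hq_eq (2*d+e+2+1) (d+e+2) (d+1) (e+1) (by omega) (by omega),
      Hq_eq (2*d+e+2) (d+e+2) d (e+2) (by omega) (by omega),
      Gq_eq (2*d+e+2) (d+e+2+1) (d+1) (e+2) (by omega) (by omega),
      Gq_eq (2*d+e+2) (d+e+2) (d+2) e (by omega) (by omega)]
  rw [show 2*(2*d+e+2+2)+(d+e+2) = 5*d+3*e+6+4 by ring,
      show 2*(2*d+e+2+1)+(d+e+2) = 5*d+3*e+6+2 by ring,
      show 2*(2*d+e+2)+(d+e+2+1) = 5*d+3*e+6+1 by ring,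
      show 2*(2*d+e+2)+(d+e+2) = 5*d+3*e+6 by ring]
  rw [Nat.cast_choose ℚ (show d+e+2 ≤ 5*d+3*e+6+4 by omega),
      Nat.cast_choose ℚ (show d+e+2 ≤ 5*d+3*e+6+2 by omega),
      Nat.cast_choose ℚ (show d+e+2+1 ≤ 5*d+3*e+6+1 by omega),
      Nat.cast_choose ℚ (show d+e+2 ≤ 5*d+3*e+6 by omega),
      Nat.cast_choose ℚ (show d+2 ≤ d+e+2 by omega),
      Nat.cast_choose ℚ (show d+1 ≤ d+e+2 by omega),
      Nat.cast_choose ℚ (show d ≤ d+e+2 by omega),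
      Nat.cast_choose ℚ (show d+1 ≤ d+e+2+1 by omega)]
  rw [show 5*d+3*e+6+4 - (d+e+2) = 4*d+2*e+4+4 by omega,
      show 5*d+3*e+6+2 - (d+e+2) = 4*d+2*e+4+2 by omega,
      show 5*d+3*e+6+1 - (d+e+2+1) = 4*d+2*e+4 by omega,
      show 5*d+3*e+6 - (d+e+2) = 4*d+2*e+4 by omega,
      show d+e+2 - (d+2) = e by omega,
      show d+e+2 - (d+1) = e+1 by omega,
      show d+e+2 - d = e+2 by omega,
      show d+e+2+1 - (d+1) = e+2 by omega]
  rw [fc4 (5*d+3*e+6), fc2 (5*d+3*e+6), fc1 (5*d+3*e+6),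
      fc4 (4*d+2*e+4), fc2 (4*d+2*e+4),
      fc1 (d+e+2), fc2 d, fc1 d, fc1 e, fc2 e]
  simp only [pow_succ]
  unfold Pm0 Pm1 Pm2 Rp
  have F1 := fne (5*d+3*e+6); have F2 := fne (4*d+2*e+4); have F3 := fne (d+e+2)
  have F4 := fne d; have F5 := fne e
  push_cast
  field_simp
  ring

lemma pointwise (m k : ℕ) (hk : k < m + 3) :
    Pm0 m * Hq (m+2) k - Pm1 m * Hq (m+1) k + Pm2 m * Hq m k
      = Gq m (k+1) - Gq m k := by
  obtain h|h|h|h|h|h : 2*k+1 ≤ m ∨ 2*k = m ∨ 2*k = m+1 ∨ (m+2 ≤ 2*k ∧ k ≤ m)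
      ∨ k = m+1 ∨ k = m+2 := by omega
  · rw [Hq_zero_of_two_mul_lt (by omega), Hq_zero_of_two_mul_lt (by omega),
        Hq_zero_of_two_mul_lt (by omega), Gq_zero_of_two_mul_lt (by omega),
        Gq_zero_of_two_mul_lt (by omega)]
    ring
  · subst h
    rw [Hq_zero_of_two_mul_lt (by omega), Hq_zero_of_two_mul_lt (by omega),
        Gq_zero_of_two_mul_lt (show 2*k < 2*k+2 by omega)]
    linear_combination case2 k
  · obtain ⟨j, rfl⟩ : ∃ j, k = j + 1 := ⟨k - 1, by omega⟩
    have hm : m = 2*j+1 := by omega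
    subst hm
    rw [Hq_zero_of_two_mul_lt (show 2*(j+1) < 2*j+1+2 by omega),
        Gq_zero_of_two_mul_lt (show 2*(j+1) < 2*j+1+2 by omega)]
    have h23 : (2*j+1+1) = 2*j+2 := by omega
    have h12 : (j+1+1) = j+2 := by omega
    rw [h23, h12]
    linear_combination case3 j
  · obtain ⟨d, e, hm, hk2⟩ : ∃ d e, m = 2*d+e+2 ∧ k = d+e+2 :=
      ⟨m - k, 2*k - m - 2, by omega, by omega⟩
    subst hm; subst hk2
    exact case4 d e
  · subst h
    rw [Hq_zero_of_lt (show m < m+1 by omega)]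
    rw [show m+1+1 = m+2 from rfl]
    linear_combination case5 m
  · subst h
    rw [Hq_zero_of_lt (show m+1 < m+2 by omega), Hq_zero_of_lt (show m < m+2 by omega),
        Gq_zero_of_lt (show m+2 < m+2+1 by omega)]
    linear_combination case6 m

lemma master (m : ℕ) :
    Pm0 m * (∑ k ∈ range (m+3), Hq (m+2) k)
      - Pm1 m * (∑ k ∈ range (m+2), Hq (m+1) k)
      + Pm2 m * (∑ k ∈ range (m+1), Hq m k) = 0 := by
  have h1 : ∑ k ∈ range (m+2), Hq (m+1) k = ∑ k ∈ range (m+3), Hq (m+1) k := by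
    rw [Finset.sum_range_succ (f := Hq (m+1)) (n := m+2),
        Hq_zero_of_lt (show m+1 < m+2 by omega), add_zero]
  have h2 : ∑ k ∈ range (m+1), Hq m k = ∑ k ∈ range (m+3), Hq m k := by
    rw [Finset.sum_range_succ (f := Hq m) (n := m+2),
        Finset.sum_range_succ (f := Hq m) (n := m+1),
        Hq_zero_of_lt (show m < m+2 by omega), Hq_zero_of_lt (show m < m+1 by omega),
        add_zero, add_zero]
  rw [h1, h2, Finset.mul_sum, Finset.mul_sum, Finset.mul_sum, ← Finset.sum_sub_distrib,
      ← Finset.sum_add_distrib]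
  have step : ∀ k ∈ range (m+3),
      Pm0 m * Hq (m+2) k - Pm1 m * Hq (m+1) k + Pm2 m * Hq m k
        = Gq m (k+1) - Gq m k := fun k hk => pointwise m k (Finset.mem_range.mp hk)
  rw [Finset.sum_congr rfl step, Finset.sum_range_sub (Gq m) (m+3),
      Gq_zero_of_lt (show m+2 < m+3 by omega),
      Gq_zero_of_two_mul_lt (show 2*0 < m+2 by omega)]
  ring

lemma sum_conv (M : ℕ) :
    ∑ k ∈ Finset.Icc (M / 2) M,
      ((-1 : ℚ) ^ (M - k) * (Nat.choose (2 * M + k) k : ℚ) *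
        (Nat.choose k (M - k) : ℚ) * (1/6 : ℚ) ^ (2 * (k : ℤ) - (M : ℤ)) *
        (1/120 : ℚ) ^ ((M : ℤ) - (k : ℤ)))
    = ∑ k ∈ range (M+1), Hq M k := by
  have hsub : Finset.Icc (M/2) M ⊆ Finset.range (M+1) := by
    intro x hx
    rw [Finset.mem_Icc] at hx
    rw [Finset.mem_range]
    omega
  rw [← Finset.sum_subset hsub (fun x hx hx2 => by
    rw [Finset.mem_range] at hx
    rw [Finset.mem_Icc] at hx2
    exact Hq_zero_of_two_mul_lt (by omega))]
  refine Finset.sum_congr rfl (fun k hk => ?_)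
  rw [Finset.mem_Icc] at hk
  rw [Hq, if_pos hk.2]

/-- The sequence `a_n` given by the explicit binomial sum satisfies the
three-term recurrence found by Zeilberger's algorithm. -/
theorem zeilberger_recurrence
    (a : ℕ → ℚ)
    (ha : ∀ n : ℕ, a n =
      (1 / (2 * n + 1 : ℚ)) *
        ∑ k ∈ Finset.Icc (n / 2) n,
          (-1 : ℚ) ^ (n - k) * (Nat.choose (2 * n + k) k : ℚ) *
            (Nat.choose k (n - k) : ℚ) * (1/6 : ℚ) ^ (2 * (k : ℤ) - (n : ℤ)) *
            (1/120 : ℚ) ^ ((n : ℤ) - (k : ℤ)))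
    (s0 s1 s2 : ℕ → ℚ)
    (hs0 : ∀ n : ℕ, s0 n = 128 * n * (n - 1) * (2 * n + 1) * (2 * n - 1) * (5 * n - 6))
    (hs1 : ∀ n : ℕ, s1 n = 80 * (n - 1) * (2 * n - 1) * (5 * n - 1) * (15 * n ^ 2 - 30 * n + 14))
    (hs2 : ∀ n : ℕ, s2 n = 3 * (5 * n - 1) * (5 * n - 4) * (5 * n - 6) * (5 * n - 7) * (5 * n - 8)) :
    ∀ n : ℕ, 2 ≤ n → s0 n * a n - s1 n * a (n - 1) + s2 n * a (n - 2) = 0 := by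
  intro n hn
  obtain ⟨m, rfl⟩ : ∃ m, n = m + 2 := ⟨n - 2, by omega⟩
  rw [show m+2-1 = m+1 from rfl, show m+2-2 = m from rfl,
      ha (m+2), ha (m+1), ha m, hs0 (m+2), hs1 (m+2), hs2 (m+2)]
  rw [sum_conv (m+2), sum_conv (m+1), sum_conv m,
      show m+2+1 = m+3 from rfl, show m+1+1 = m+2 from rfl]
  have key := master m
  set T0 := ∑ k ∈ range (m+3), Hq (m+2) k with hT0
  set T1 := ∑ k ∈ range (m+2), Hq (m+1) k with hT1
  set T2 := ∑ k ∈ range (m+1), Hq m k with hT2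
  unfold Pm0 Pm1 Pm2 at key
  have h1 : 2*(m:ℚ)+1 ≠ 0 := by positivity
  have h3 : 2*(m:ℚ)+3 ≠ 0 := by positivity
  have h5 : 2*(m:ℚ)+5 ≠ 0 := by positivity
  push_cast
  field_simp
  linear_combination (2*(m:ℚ)+3) * key
end

section
/- Let b_n be the sequence of rationals defined by b_0 = 1, b_1 = 1, and the recurrence s_0(n)·b_n = s_1(n)·b_{n-1} - s_2(n)·b_{n-2} for n ≥ 2, where s_0(n) = 128n(n-1)(2n+1)(2n-1)(5n-6), s_1(n) = 80(n-1)(2n-1)(5n-1)(15n^2-30n+14), s_2(n) = 3(5n-1)(5n-4)(5n-6)(5n-7)(5n-8). Then b_n ≥ b_{n-1} > 0 for all n ≥ 1; in particular all b_n are positive. -/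
/-- The sequence `b_n` with `b_0 = b_1 = 1` satisfying the three-term
recurrence `s_0(n) b_n = s_1(n) b_{n-1} - s_2(n) b_{n-2}` is increasing and
positive: `b_n ≥ b_{n-1} > 0` for all `n ≥ 1`. -/
theorem auxiliary_sequence_positive
    (s0 s1 s2 : ℕ → ℚ)
    (hs0 : ∀ n : ℕ, s0 n = 128 * n * (n - 1) * (2 * n + 1) * (2 * n - 1) * (5 * n - 6))
    (hs1 : ∀ n : ℕ, s1 n = 80 * (n - 1) * (2 * n - 1) * (5 * n - 1) * (15 * n ^ 2 - 30 * n + 14))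
    (hs2 : ∀ n : ℕ, s2 n = 3 * (5 * n - 1) * (5 * n - 4) * (5 * n - 6) * (5 * n - 7) * (5 * n - 8))
    (b : ℕ → ℚ) (hb0 : b 0 = 1) (hb1 : b 1 = 1)
    (hrec : ∀ n : ℕ, 2 ≤ n → s0 n * b n = s1 n * b (n - 1) - s2 n * b (n - 2)) :
    ∀ n : ℕ, 1 ≤ n → b n ≥ b (n - 1) ∧ b (n - 1) > 0 ∧ b n > 0 := by
  intro n hn
  induction n, hn using Nat.le_induction with
  | base => simp [hb0, hb1]
  | succ n hn ih =>
    obtain ⟨h1, h2, h3⟩ := ih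
    have hx : (2 : ℚ) ≤ (n + 1 : ℕ) := by push_cast; linarith [Nat.one_le_cast (α := ℚ) |>.mpr hn]
    set x : ℚ := ((n + 1 : ℕ) : ℚ) with hxdef
    have hs0pos : 0 < s0 (n + 1) := by
      rw [hs0 (n + 1), ← hxdef]
      exact mul_pos (mul_pos (mul_pos (mul_pos (by linarith : (0:ℚ) < 128 * x)
        (by linarith : (0:ℚ) < x - 1)) (by linarith : (0:ℚ) < 2 * x + 1))
        (by linarith : (0:ℚ) < 2 * x - 1)) (by linarith : (0:ℚ) < 5 * x - 6)
    have hs2pos : 0 < s2 (n + 1) := by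
      rw [hs2 (n + 1), ← hxdef]
      exact mul_pos (mul_pos (mul_pos (mul_pos (by linarith : (0:ℚ) < 3 * (5 * x - 1))
        (by linarith : (0:ℚ) < 5 * x - 4)) (by linarith : (0:ℚ) < 5 * x - 6))
        (by linarith : (0:ℚ) < 5 * x - 7)) (by linarith : (0:ℚ) < 5 * x - 8)
    have hkey : s0 (n + 1) ≤ s1 (n + 1) - s2 (n + 1) := by
      rw [hs0 (n + 1), hs1 (n + 1), hs2 (n + 1), ← hxdef]
      nlinarith [sq_nonneg (x - 2), sq_nonneg x, sq_nonneg (x - 2) , mul_nonneg (mul_nonneg (sq_nonneg (x-2)) (sq_nonneg (x-2))) (by linarith : (0:ℚ) ≤ x - 2), mul_nonneg (sq_nonneg (x-2)) (by linarith : (0:ℚ) ≤ x - 2), mul_nonneg (mul_nonneg (by linarith : (0:ℚ) ≤ x - 2) (by linarith : (0:ℚ) ≤ x - 2)) (sq_nonneg (x-2))]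
    have hr := hrec (n + 1) (by omega)
    have e1 : n + 1 - 1 = n := by omega
    have e2 : n + 1 - 2 = n - 1 := by omega
    rw [e1, e2] at hr
    rw [e1]
    have hstep : s0 (n + 1) * b n ≤ s0 (n + 1) * b (n + 1) := by
      rw [hr]
      have : s2 (n + 1) * b (n - 1) ≤ s2 (n + 1) * b n := by
        exact mul_le_mul_of_nonneg_left h1 hs2pos.le
      nlinarith [mul_le_mul_of_nonneg_right hkey h3.le]
    have hge : b n ≤ b (n + 1) := le_of_mul_le_mul_left hstep hs0pos
    exact ⟨hge, h3, lt_of_lt_of_le h3 hge⟩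
end

section
/- For all n ≥ 1, the coefficient of t^{2n-1} in the Maclaurin series of tan(t) equals 2^{2n}(2^{2n}-1)|B_{2n}|/(2n)!, where B_{2n} is the 2n-th Bernoulli number. -/
open PowerSeries Complex Finset Real

/-! ### Coefficient sequences -/

noncomputable def tanC : ℕ → ℂ := fun k =>
  ((2*Complex.I)^(k+1) - (4*Complex.I)^(k+1)) * ((bernoulli (k+1) : ℚ) : ℂ)
      / (Nat.factorial (k+1) : ℂ)
    - (if k = 0 then Complex.I else 0)

noncomputable def cosC : ℕ → ℂ := fun l =>
  if l % 2 = 0 then (-1)^(l/2) / (Nat.factorial l : ℂ) else 0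

noncomputable def sinC : ℕ → ℂ := fun m =>
  if m % 2 = 1 then (-1)^(m/2) / (Nat.factorial m : ℂ) else 0

noncomputable def tanR : ℕ → ℝ := fun k =>
  if k % 2 = 1 then
    (-1 : ℝ)^((k+1)/2+1) * 2^(k+1) * (2^(k+1)-1) * ((bernoulli (k+1) : ℚ) : ℝ)
      / (Nat.factorial (k+1) : ℝ)
  else 0

noncomputable def cosR : ℕ → ℝ := fun l =>
  if l % 2 = 0 then (-1:ℝ)^(l/2) / (Nat.factorial l : ℝ) else 0

noncomputable def sinR : ℕ → ℝ := fun m =>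
  if m % 2 = 1 then (-1:ℝ)^(m/2) / (Nat.factorial m : ℝ) else 0

/-! ### Formal power series identities over `ℂ⟦X⟧` -/

lemma lemA : (X : ℂ⟦X⟧) * PowerSeries.mk tanC =
    rescale (2*I) (bernoulliPowerSeries ℂ) - rescale (4*I) (bernoulliPowerSeries ℂ)
      - PowerSeries.C (R := ℂ) I * X := by
  ext n
  cases n with
  | zero =>
    simp only [coeff_zero_X_mul, map_sub, coeff_rescale, PowerSeries.coeff_C_mul,
      PowerSeries.coeff_X]
    simp [bernoulliPowerSeries, coeff_mk]
  | succ k =>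
    simp only [coeff_succ_X_mul, coeff_mk, map_sub, coeff_rescale, bernoulliPowerSeries,
      PowerSeries.coeff_C_mul, PowerSeries.coeff_X, tanC, eq_ratCast]
    rcases eq_or_ne k 0 with rfl | hk
    · rw [if_pos rfl, if_pos rfl]
      norm_num [bernoulli_one]
      push_cast
      ring
    · rw [if_neg hk, if_neg (by omega : k + 1 ≠ 1)]
      push_cast
      ring

lemma lemB : PowerSeries.C (R := ℂ) 2 * PowerSeries.mk cosC =
    rescale I (exp ℂ) + rescale (-I) (exp ℂ) := by
  ext n
  simp only [PowerSeries.coeff_C_mul, coeff_mk, map_add, coeff_rescale, coeff_exp, cosC,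
    eq_ratCast]
  rcases Nat.even_or_odd n with ⟨m, hm⟩ | ⟨m, hm⟩
  · subst hm
    rw [if_pos (by omega)]
    have h1 : (I:ℂ)^(m+m) = (-1)^m := by rw [← two_mul, pow_mul, I_sq]
    have h2 : ((-I):ℂ)^(m+m) = (-1)^m := by rw [Even.neg_pow ⟨m, rfl⟩, h1]
    rw [h1, h2, (by omega : (m+m)/2 = m)]
    push_cast
    ring
  · subst hm
    rw [if_neg (by omega)]
    have h2 : ((-I):ℂ)^(2*m+1) = -(I^(2*m+1)) := Odd.neg_pow ⟨m, by ring⟩ I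
    rw [h2]
    push_cast
    ring

lemma lemC : PowerSeries.C (R := ℂ) (2*I) * PowerSeries.mk sinC =
    rescale I (exp ℂ) - rescale (-I) (exp ℂ) := by
  ext n
  simp only [PowerSeries.coeff_C_mul, coeff_mk, map_sub, coeff_rescale, coeff_exp, sinC,
    eq_ratCast]
  rcases Nat.even_or_odd n with ⟨m, hm⟩ | ⟨m, hm⟩
  · subst hm
    rw [if_neg (by omega)]
    have h2 : ((-I):ℂ)^(m+m) = (I:ℂ)^(m+m) := Even.neg_pow ⟨m, rfl⟩ I
    rw [h2]
    push_cast
    ring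
  · subst hm
    rw [if_pos (by omega)]
    have h1 : (I:ℂ)^(2*m+1) = (-1)^m * I := by rw [pow_succ, pow_mul, I_sq]
    have h2 : ((-I):ℂ)^(2*m+1) = -((-1)^m * I) := by rw [Odd.neg_pow ⟨m, by ring⟩, h1]
    rw [h1, h2, (by omega : (2*m+1)/2 = m)]
    push_cast
    ring

lemma hi : (PowerSeries.C (R := ℂ) I) * (PowerSeries.C (R := ℂ) I) = -1 := by
  rw [← map_mul, I_mul_I, map_neg, map_one]

lemma claim3 : PowerSeries.mk tanC * PowerSeries.mk cosC = PowerSeries.mk sinC := by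
  set i := PowerSeries.C (R := ℂ) I with hidef
  set u := rescale (2*I) (exp ℂ) with hudef
  set v := rescale I (exp ℂ) with hvdef
  set w := rescale (-I) (exp ℂ) with hwdef
  set P := rescale (2*I) (bernoulliPowerSeries ℂ) with hPdef
  set Q := rescale (4*I) (bernoulliPowerSeries ℂ) with hQdef
  have hBe := bernoulliPowerSeries_mul_exp_sub_one ℂ
  have hP : P * (u - 1) = 2 * (i * X) := by
    have := congrArg (rescale (2*I)) hBe
    simp only [map_mul, map_sub, map_one, rescale_X] at this
    rw [← hudef, ← hPdef] at this
    rw [this, map_ofNat, ← hidef]; ring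
  have hQ' : Q * (rescale (4*I) (exp ℂ) - 1) = 4 * (i * X) := by
    have := congrArg (rescale (4*I)) hBe
    simp only [map_mul, map_sub, map_one, rescale_X] at this
    rw [← hQdef] at this
    rw [this, map_ofNat, ← hidef]; ring
  have huu : u * u = rescale (4*I) (exp ℂ) := by
    rw [hudef, exp_mul_exp_eq_exp_add, show (2*I+2*I : ℂ) = 4*I by ring]
  have hQ2 : Q * (u * u - 1) = 4 * (i * X) := by rw [huu]; exact hQ'
  have hvv : v * v = u := by
    rw [hvdef, hudef, exp_mul_exp_eq_exp_add, show (I+I : ℂ) = 2*I by ring]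
  have hvw : v * w = 1 := by
    rw [hvdef, hwdef, exp_mul_exp_eq_exp_add]
    simp [rescale_zero]
  have hu1 : u - 1 ≠ 0 := by
    intro h
    have := congrArg (coeff (R := ℂ) 1) h
    simp [hudef, coeff_rescale, coeff_exp, PowerSeries.coeff_one] at this
  have h2i : (2 : ℂ⟦X⟧) * i ≠ 0 := by
    intro h
    have := congrArg (constantCoeff (R := ℂ)) h
    rw [map_mul, hidef] at this
    simp [map_ofNat, I_ne_zero] at this
  set U := P - Q - i * X with hUdef
  have claim1 : i * U * (u + 1) = X * (u - 1) := by
    apply mul_right_cancel₀ hu1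
    rw [hUdef]
    linear_combination (i*(u+1)) * hP - i * hQ2 + (-(X*(u*u-1)) + 2*X*(u+1) - 4*X) * hi
  have h3 : (u+1)*w = v+w := by
    calc (u+1)*w = v*(v*w)+w := by rw [← hvv]; ring
      _ = v+w := by rw [hvw, mul_one]
  have h4 : (u-1)*w = v-w := by
    calc (u-1)*w = v*(v*w)-w := by rw [← hvv]; ring
      _ = v-w := by rw [hvw, mul_one]
  have h1 : i * U * (v + w) = X * (v - w) := by
    calc i * U * (v+w) = i * U * ((u+1)*w) := by rw [h3]
      _ = (X * (u-1)) * w := by rw [← claim1]; ring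
      _ = X * (v-w) := by rw [mul_assoc, h4]
  have h5 : (2 * i) * (PowerSeries.mk tanC * PowerSeries.mk cosC)
      = (2 * i) * PowerSeries.mk sinC := by
    apply mul_left_cancel₀ (PowerSeries.X_ne_zero : (X:ℂ⟦X⟧) ≠ 0)
    have hXT : (X : ℂ⟦X⟧) * PowerSeries.mk tanC = U := by
      rw [lemA, hUdef, hPdef, hQdef, hidef]
    calc X * ((2*i) * (PowerSeries.mk tanC * PowerSeries.mk cosC))
        = i * ((X * PowerSeries.mk tanC) * (PowerSeries.C (R := ℂ) 2 * PowerSeries.mk cosC)) := by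
          rw [map_ofNat]; ring
      _ = i * (U * (v + w)) := by rw [hXT, lemB]
      _ = X * (v - w) := by rw [← h1]; ring
      _ = X * (PowerSeries.C (R := ℂ) (2*I) * PowerSeries.mk sinC) := by rw [lemC]
      _ = X * ((2*i) * PowerSeries.mk sinC) := by rw [map_mul, map_ofNat, hidef]
  exact mul_left_cancel₀ h2i h5

lemma coeffId (m : ℕ) :
    ∑ p ∈ antidiagonal m, tanC p.1 * cosC p.2 = sinC m := by
  have := congrArg (coeff (R := ℂ) m) claim3
  simpa [PowerSeries.coeff_mul, coeff_mk] using this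

/-! ### Casting the coefficients to `ℝ` -/

lemma cosR_cast (l : ℕ) : ((cosR l : ℝ) : ℂ) = cosC l := by
  rw [cosR, cosC]
  split
  · push_cast; ring
  · push_cast; ring

lemma sinR_cast (m : ℕ) : ((sinR m : ℝ) : ℂ) = sinC m := by
  rw [sinR, sinC]
  split
  · push_cast; ring
  · push_cast; ring

lemma tanR_cast (k : ℕ) : ((tanR k : ℝ) : ℂ) = tanC k := by
  rcases Nat.even_or_odd k with hk | hk
  · obtain ⟨m, hm⟩ := hk
    have hk0 : k % 2 = 0 := by omega
    rw [tanR, if_neg (by omega)]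
    rcases eq_or_ne k 0 with rfl | hne
    · rw [tanC]
      norm_num [bernoulli_one]
      ring
    · have hodd : Odd (k+1) := ⟨m, by omega⟩
      have hb : bernoulli (k+1) = 0 := by
        rw [bernoulli_eq_bernoulli'_of_ne_one (by omega)]
        exact bernoulli'_eq_zero_of_odd hodd (by omega)
      rw [tanC, if_neg hne, hb]
      push_cast
      ring
  · obtain ⟨m, hm⟩ := hk
    set n := m + 1 with hndef
    have hk1 : k + 1 = 2*n := by omega
    have hk2 : (k+1)/2 = n := by omega
    rw [tanR, if_pos (by omega), hk2, tanC, if_neg (by omega), hk1]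
    have e2 : ((2*Complex.I))^(2*n) = ((-4 : ℂ))^n := by
      rw [pow_mul]
      norm_num [mul_pow, I_sq]
    have e4 : ((4*Complex.I))^(2*n) = ((-16 : ℂ))^n := by
      rw [pow_mul]
      norm_num [mul_pow, I_sq]
    rw [e2, e4, sub_zero]
    have e5 : ((-4 : ℂ))^n = (-1)^n * 4^n := by rw [neg_pow]
    have e6 : ((-16 : ℂ))^n = (-1)^n * (4^n * 4^n) := by
      rw [show ((-16:ℂ)) = (-1)*(4*4) by norm_num, mul_pow, mul_pow]
    have e7 : ((2:ℂ))^(2*n) = 4^n := by rw [pow_mul]; norm_num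
    have e8 : ((2:ℝ))^(2*n) = 4^n := by rw [pow_mul]; norm_num
    rw [e5, e6]
    push_cast [e7, e8]
    ring

lemma coeffId_real (m : ℕ) :
    ∑ p ∈ antidiagonal m, tanR p.1 * cosR p.2 = sinR m := by
  have h := coeffId m
  have hc : ((∑ p ∈ antidiagonal m, tanR p.1 * cosR p.2 : ℝ) : ℂ) = ((sinR m : ℝ) : ℂ) := by
    push_cast
    simp_rw [tanR_cast, cosR_cast]
    rw [h, ← sinR_cast]
  exact_mod_cast hc
-- sign and bound for Bernoulli numbers
lemma bern_facts (n : ℕ) (hn : 1 ≤ n) :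
    |((bernoulli (2*n) : ℚ) : ℝ)| = (-1:ℝ)^(n+1) * ((bernoulli (2*n) : ℚ) : ℝ) ∧
    |((bernoulli (2*n) : ℚ) : ℝ)| / (Nat.factorial (2*n) : ℝ) ≤ (π^2/3) / (2*π)^(2*n) := by
  have h := hasSum_zeta_nat (k := n) (by omega)
  set a := ((bernoulli (2*n) : ℚ) : ℝ) with ha
  set s := (-1:ℝ)^(n+1) with hs
  set val := s * 2^(2*n-1) * π^(2*n) * a / (Nat.factorial (2*n) : ℝ) with hval
  have h1 : (1:ℝ) ≤ val := by
    have := le_hasSum h 1 (fun j _ => by positivity)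
    simpa using this
  have h2 : val ≤ π^2/6 := by
    refine hasSum_le (fun j => ?_) h hasSum_zeta_two
    rcases Nat.eq_zero_or_pos j with rfl | hj
    · norm_num [zero_pow (by omega : 2*n ≠ 0)]
    · have hj1 : (1:ℝ) ≤ (j:ℝ) := by exact_mod_cast hj
      exact one_div_le_one_div_of_le (by positivity) (pow_le_pow_right₀ hj1 (by omega))
  have hpow : (2:ℝ)^(2*n) = 2 * 2^(2*n-1) := by
    rw [← pow_succ']
    congr 1
    omega
  have hc : (0:ℝ) < 2^(2*n-1) * π^(2*n) / (Nat.factorial (2*n) : ℝ) := by positivity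
  have hsa : s * a / (Nat.factorial (2*n) : ℝ) = val / (2^(2*n-1) * π^(2*n)) := by
    rw [hval]
    have : π^(2*n) ≠ 0 := by positivity
    field_simp
  have hsapos : 0 < s * a := by
    have hv : 0 < val := lt_of_lt_of_le one_pos h1
    have : 0 < s * a / (Nat.factorial (2*n) : ℝ) := by
      rw [hsa]; positivity
    rcases div_pos_iff.mp this with ⟨hgood, _⟩ | ⟨_, hbad⟩
    · exact hgood
    · have hf : (0:ℝ) < (Nat.factorial (2*n) : ℝ) := by positivity
      linarith
  have habs : |a| = s * a := by
    have h1' : |s| = 1 := by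
      rw [hs, _root_.abs_pow, _root_.abs_neg, _root_.abs_one, one_pow]
    calc |a| = |s| * |a| := by rw [h1', one_mul]
      _ = |s * a| := (abs_mul s a).symm
      _ = s * a := abs_of_pos hsapos
  refine ⟨habs, ?_⟩
  rw [habs, hsa]
  have hle : val / (2^(2*n-1) * π^(2*n)) ≤ (π^2/6) / (2^(2*n-1) * π^(2*n)) := by
    gcongr
  have heq : (π^2/6) / (2^(2*n-1) * π^(2*n)) = (π^2/3) / (2*π)^(2*n) := by
    rw [mul_pow, hpow]
    have hpi : π^(2*n) ≠ 0 := by positivity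
    field_simp
    ring
  linarith

lemma tanR_two_sub_one (n : ℕ) (hn : 1 ≤ n) :
    tanR (2*n-1) = (-1:ℝ)^(n+1) * 2^(2*n) * (2^(2*n)-1) * ((bernoulli (2*n) : ℚ) : ℝ)
      / (Nat.factorial (2*n) : ℝ) := by
  have h1 : (2*n-1) % 2 = 1 := by omega
  have h2 : 2*n-1+1 = 2*n := by omega
  have h3 : (2*n-1+1)/2 = n := by omega
  rw [tanR, if_pos h1, h3, h2]

lemma tanR_bound (k : ℕ) : |tanR k| ≤ 4 := by
  rcases Nat.even_or_odd k with hk | hk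
  · have : k % 2 = 0 := by rcases hk with ⟨m, hm⟩; omega
    simp [tanR, this]
  · obtain ⟨m, hm⟩ := hk
    set n := m + 1 with hn
    have hk2 : k = 2*n-1 := by omega
    obtain ⟨hsign, hbound⟩ := bern_facts n (by omega)
    rw [hk2, tanR_two_sub_one n (by omega)]
    set a := ((bernoulli (2*n) : ℚ) : ℝ) with ha
    have h21 : (1:ℝ) ≤ 2^(2*n) := one_le_pow₀ (by norm_num)
    have habs : |(-1:ℝ)^(n+1) * 2^(2*n) * (2^(2*n)-1) * a / (Nat.factorial (2*n) : ℝ)|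
        = 2^(2*n) * (2^(2*n)-1) * (|a| / (Nat.factorial (2*n) : ℝ)) := by
      rw [_root_.abs_div, _root_.abs_mul, _root_.abs_mul, _root_.abs_mul, _root_.abs_pow,
        _root_.abs_neg, _root_.abs_one, one_pow, one_mul, Nat.abs_cast,
        _root_.abs_of_nonneg (by positivity : (0:ℝ) ≤ (2:ℝ)^(2*n)),
        _root_.abs_of_nonneg (by linarith : (0:ℝ) ≤ (2:ℝ)^(2*n)-1)]
      ring
    rw [habs]
    have hstep : 2^(2*n) * (2^(2*n)-1) * (|a| / (Nat.factorial (2*n) : ℝ))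
        ≤ 2^(2*n) * 2^(2*n) * ((π^2/3) / (2*π)^(2*n)) := by
      have h0 : (0:ℝ) ≤ |a| / (Nat.factorial (2*n) : ℝ) := by positivity
      have h1 : (2:ℝ)^(2*n)-1 ≤ 2^(2*n) := by linarith
      have h2 : (0:ℝ) ≤ (2:ℝ)^(2*n)-1 := by linarith
      apply mul_le_mul (mul_le_mul le_rfl h1 h2 (by positivity)) hbound h0 (by positivity)
    refine hstep.trans ?_
    have hptwo : (2:ℝ) < π := by
      have := Real.pi_gt_three; linarith
    have hkey : (2:ℝ)^(2*n) * 2^(2*n) * ((π^2/3) / (2*π)^(2*n)) = (π^2/3) * (4/π^2)^n := by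
      have hne : ((2*π):ℝ)^(2*n) ≠ 0 := by positivity
      rw [div_pow]
      have e1 : (2:ℝ)^(2*n) = 4^n := by rw [pow_mul]; norm_num
      have e2 : ((2*π):ℝ)^(2*n) = 4^n * (π^2)^n := by
        rw [mul_pow, pow_mul, pow_mul]; norm_num
      rw [e1, e2]
      have h4 : ((4:ℝ)^n) ≠ 0 := by positivity
      have h5 : ((π^2:ℝ)^n) ≠ 0 := by positivity
      field_simp
    rw [hkey]
    have hr : (4/π^2 : ℝ) ≤ 4/9 := by
      have h9 : (9:ℝ) ≤ π^2 := by nlinarith [Real.pi_gt_three]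
      rw [div_le_div_iff₀ (by positivity) (by norm_num)]
      linarith
    have hrn : ((4:ℝ)/π^2)^n ≤ 4/9 := by
      calc ((4:ℝ)/π^2)^n ≤ (4/π^2)^1 := by
            apply pow_le_pow_of_le_one (by positivity) (by nlinarith [Real.pi_gt_three]) (by omega)
      _ = 4/π^2 := pow_one _
      _ ≤ 4/9 := hr
    have hp2 : π^2 ≤ 10 := by nlinarith [Real.pi_lt_d2]
    calc (π^2/3) * (4/π^2)^n ≤ (10/3) * (4/9) := by
          apply mul_le_mul (by linarith) hrn (by positivity) (by norm_num)
      _ ≤ 4 := by norm_num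

/-! ### HasSum lemmas -/

lemma hasSum_cosR (x : ℝ) : HasSum (fun l => cosR l * x^l) (Real.cos x) := by
  have h0 : (fun n : ℕ => cosR (2*n) * x^(2*n))
      = fun n => (-1)^n * x^(2*n) / (Nat.factorial (2*n) : ℝ) := by
    funext n
    rw [cosR, if_pos (by omega), (by omega : 2*n/2 = n)]
    ring
  have h1 : HasSum (fun n : ℕ => cosR (2*n) * x^(2*n)) (Real.cos x) := by
    rw [h0]; exact Real.hasSum_cos x
  have hinj : Function.Injective (fun n : ℕ => 2*n) := fun a b h => by simp at h; omega
  refine (Function.Injective.hasSum_iff hinj ?_).mp h1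
  intro m hm
  have hm1 : m % 2 = 1 := by
    by_contra hme
    exact hm ⟨m/2, by simp; omega⟩
  simp [cosR, hm1]

lemma hasSum_sinR (x : ℝ) : HasSum (fun m => sinR m * x^m) (Real.sin x) := by
  have h0 : (fun n : ℕ => sinR (2*n+1) * x^(2*n+1))
      = fun n => (-1)^n * x^(2*n+1) / (Nat.factorial (2*n+1) : ℝ) := by
    funext n
    rw [sinR, if_pos (by omega), (by omega : (2*n+1)/2 = n)]
    ring
  have h1 : HasSum (fun n : ℕ => sinR (2*n+1) * x^(2*n+1)) (Real.sin x) := by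
    rw [h0]; exact Real.hasSum_sin x
  have hinj : Function.Injective (fun n : ℕ => 2*n+1) := fun a b h => by simp at h; omega
  refine (Function.Injective.hasSum_iff hinj ?_).mp h1
  intro m hm
  have hm1 : m % 2 = 0 := by
    by_contra hme
    exact hm ⟨m/2, by simp; omega⟩
  simp [sinR, hm1]

lemma summable_tanR_norm {x : ℝ} (hx : |x| < 1) : Summable fun k => ‖tanR k * x^k‖ := by
  apply Summable.of_nonneg_of_le (fun k => norm_nonneg _) (fun k => ?_)
    ((summable_geometric_of_lt_one (abs_nonneg x) hx).mul_left 4)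
  rw [norm_mul, norm_pow, Real.norm_eq_abs, Real.norm_eq_abs]
  exact mul_le_mul_of_nonneg_right (tanR_bound k) (by positivity)

lemma summable_cosR_norm (x : ℝ) : Summable fun l => ‖cosR l * x^l‖ := by
  apply Summable.of_nonneg_of_le (fun _ => norm_nonneg _) (fun l => ?_)
    (Real.summable_pow_div_factorial |x|)
  rw [norm_mul, norm_pow, Real.norm_eq_abs, Real.norm_eq_abs]
  have h1 : |cosR l| ≤ 1 / (Nat.factorial l : ℝ) := by
    rw [cosR]
    split
    · rw [_root_.abs_div, _root_.abs_pow, _root_.abs_neg, _root_.abs_one, one_pow, Nat.abs_cast]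
    · rw [_root_.abs_zero]
      positivity
  calc |cosR l| * |x|^l ≤ (1/(Nat.factorial l : ℝ)) * |x|^l :=
        mul_le_mul_of_nonneg_right h1 (by positivity)
    _ = |x|^l / (Nat.factorial l : ℝ) := by ring

lemma hasSum_tanR {x : ℝ} (hx : |x| < 1) : HasSum (fun k => tanR k * x^k) (Real.tan x) := by
  have hT := summable_tanR_norm hx
  have hC := summable_cosR_norm x
  have hs : Summable fun k => tanR k * x^k := hT.of_norm
  have key : (∑' k, tanR k * x^k) * Real.cos x = Real.sin x := by
    rw [← (hasSum_cosR x).tsum_eq, tsum_mul_tsum_eq_tsum_sum_antidiagonal_of_summable_norm hT hC,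
      ← (hasSum_sinR x).tsum_eq]
    apply tsum_congr
    intro m
    calc ∑ p ∈ antidiagonal m, (tanR p.1 * x^p.1) * (cosR p.2 * x^p.2)
        = ∑ p ∈ antidiagonal m, (tanR p.1 * cosR p.2) * x^m := by
          apply Finset.sum_congr rfl
          intro p hp
          have hpm : p.1 + p.2 = m := Finset.HasAntidiagonal.mem_antidiagonal.mp hp
          rw [← hpm, pow_add]; ring
      _ = sinR m * x^m := by rw [← Finset.sum_mul, coeffId_real]
  have hcos : Real.cos x ≠ 0 := by
    have hx' := abs_lt.mp hx
    have hpi : (1:ℝ) < π/2 := by nlinarith [Real.pi_gt_three]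
    exact (Real.cos_pos_of_mem_Ioo ⟨by linarith [hx'.1], by linarith [hx'.2]⟩).ne'
  rw [Summable.hasSum_iff hs, Real.tan_eq_sin_div_cos, eq_div_iff hcos]
  exact key

/-! ### tan's power series -/

lemma tan_hasFPS :
    HasFPowerSeriesOnBall Real.tan (FormalMultilinearSeries.ofScalars ℝ tanR) 0 1 := by
  constructor
  · apply FormalMultilinearSeries.le_radius_of_bound _ 4
    intro n
    rw [FormalMultilinearSeries.ofScalars_norm]
    norm_num
    exact tanR_bound n
  · exact one_pos
  · intro y hy
    rw [mem_emetric_ball_zero_iff] at hy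
    have hy' : |y| < 1 := by
      rw [← Real.norm_eq_abs]
      exact_mod_cast (ENNReal.coe_lt_one_iff.mp hy)
    simp only [FormalMultilinearSeries.ofScalars_apply_eq, smul_eq_mul, zero_add]
    exact hasSum_tanR hy'

lemma iter_tan (m : ℕ) :
    iteratedDeriv m Real.tan 0 = (Nat.factorial m : ℝ) * tanR m := by
  have h := tan_hasFPS.factorial_smul (1:ℝ) m
  rw [FormalMultilinearSeries.ofScalars_apply_eq] at h
  rw [iteratedFDeriv_apply_eq_iteratedDeriv_mul_prod] at h
  simp only [one_pow, smul_eq_mul, mul_one, Finset.prod_const_one, nsmul_eq_mul] at h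
  rw [one_mul] at h
  exact h.symm

/-! ### Main theorem -/

/-- For all `n ≥ 1`, the coefficient of `t^{2n-1}` in the Maclaurin series of
`tan` equals `2^{2n}(2^{2n}-1)|B_{2n}|/(2n)!`, where `B_{2n}` is the `2n`-th
Bernoulli number. -/
theorem tan_maclaurin_coefficient (n : ℕ) (hn : 1 ≤ n) :
    iteratedDeriv (2 * n - 1) Real.tan 0 / (Nat.factorial (2 * n - 1)) =
      2 ^ (2 * n) * (2 ^ (2 * n) - 1) * |((bernoulli (2 * n) : ℚ) : ℝ)| /
        (Nat.factorial (2 * n)) := by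
  rw [iter_tan (2*n-1), tanR_two_sub_one n hn]
  obtain ⟨hsign, -⟩ := bern_facts n hn
  rw [hsign]
  have hf1 : (Nat.factorial (2*n-1) : ℝ) ≠ 0 := by positivity
  have hf2 : (Nat.factorial (2*n) : ℝ) ≠ 0 := by positivity
  field_simp
end
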